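/- Let α ∈ (2,∞) and let F : (0,∞) → (0,∞) be continuous, strictly increasing with lim_{t→∞} F(t) = ∞, regularly varying of index 1/α, and satisfy lim_{t→∞} F(t)/√(log t) = ∞. Let U : ℝ² → (0,∞) be measurable, Lebesgue integrable, and have regular (F,α)-decay. Then for every ℓ > 0 the Gaussian convolution |φ₀|² * U also has regular (F,α)-decay, i.e. lim_{|x|→∞} F(1/(|φ₀|² * U)(x))/|x| = 1. -/

import Mathlib

open MeasureTheory Filter Real

noncomputable section

abbrev E2 := EuclideanSpace ℝ (Fin 2)

/-- The centred Gaussian probability density `|φ₀(x)|² = (2πℓ²)⁻¹ exp(-|x|²/(2ℓ²))` on `ℝ²`. -/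
def phiSq (l : ℝ) (x : E2) : ℝ := (2 * π * l ^ 2)⁻¹ * Real.exp (-‖x‖ ^ 2 / (2 * l ^ 2))

/-- The Gaussian convolution `(|φ₀|² * U)(x) = ∫ |φ₀(y)|² U(x-y) dy`. -/
def gaussConv (l : ℝ) (U : E2 → ℝ) (x : E2) : ℝ := ∫ y : E2, phiSq l y * U (x - y)

lemma rexp_norm_eq (l : ℝ) (x : E2) :
    Real.exp (-‖x‖ ^ 2 / (2 * l ^ 2)) = Real.exp (-(2 * l ^ 2)⁻¹ * ‖x‖ ^ 2) := by
  congr 1; ring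

lemma integrable_gauss {l : ℝ} (hl : 0 < l) :
    Integrable (fun v : E2 => Real.exp (-(2 * l ^ 2)⁻¹ * ‖v‖ ^ 2)) := by
  have hb : (0:ℝ) < (2 * l ^ 2)⁻¹ := by positivity
  have h := (GaussianFourier.integrable_cexp_neg_mul_sq_norm_add (V := E2)
    (b := (((2 * l ^ 2)⁻¹ : ℝ) : ℂ)) (by rw [Complex.ofReal_re]; exact hb) 0 0).re
  refine h.congr (Eventually.of_forall fun v => ?_)
  have harg : (-(((2 * l ^ 2)⁻¹ : ℝ) : ℂ) * (‖v‖ : ℂ) ^ 2 + 0 * ((inner ℝ (0:E2) v : ℝ) : ℂ))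
      = ((-(2 * l ^ 2)⁻¹ * ‖v‖ ^ 2 : ℝ) : ℂ) := by push_cast; ring
  show Complex.re _ = _
  rw [harg, ← Complex.ofReal_exp, Complex.ofReal_re]

lemma integrable_phiSq {l : ℝ} (hl : 0 < l) : Integrable (phiSq l) := by
  unfold phiSq
  simp_rw [rexp_norm_eq l]
  exact (integrable_gauss hl).const_mul _

lemma integral_phiSq {l : ℝ} (hl : 0 < l) : ∫ y : E2, phiSq l y = 1 := by
  unfold phiSq
  simp_rw [rexp_norm_eq l]
  rw [integral_const_mul, GaussianFourier.integral_rexp_neg_mul_sq_norm (by positivity)]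
  rw [finrank_euclideanSpace_fin]
  have hπ : π ≠ 0 := Real.pi_ne_zero
  norm_num
  field_simp


set_option maxHeartbeats 3000000 in
/-- If `U` is integrable with sub-Gaussian, regular `(F,α)`-decay (`α ∈ (2,∞)`), then the
Gaussian convolution `|φ₀|² * U` has the same regular `(F,α)`-decay. -/
theorem stmt_5
    (α : ℝ) (hα : 2 < α)
    (F : ℝ → ℝ)
    (hFpos : ∀ t > 0, 0 < F t)
    (hFcont : ContinuousOn F (Set.Ioi 0))
    (hFmono : StrictMonoOn F (Set.Ioi 0))
    (hFtop : Tendsto F atTop atTop)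
    (hFreg : ∀ c > 0, Tendsto (fun t : ℝ => F (c * t) / F t) atTop (nhds (c ^ (1 / α))))
    (hFsub : Tendsto (fun t : ℝ => F t / Real.sqrt (Real.log t)) atTop atTop)
    (U : E2 → ℝ)
    (hUpos : ∀ x, 0 < U x)
    (hUmeas : Measurable U)
    (hUint : Integrable U)
    (hUdecay : Tendsto (fun x : E2 => F (1 / U x) / ‖x‖)
      (comap (fun x : E2 => ‖x‖) atTop) (nhds 1))
    (l : ℝ) (hl : 0 < l) :
    Tendsto (fun x : E2 => F (1 / gaussConv l U x) / ‖x‖)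
      (comap (fun x : E2 => ‖x‖) atTop) (nhds 1) := by
  have hπl : (0:ℝ) < 2 * π * l ^ 2 := by positivity
  have hmono : MonotoneOn F (Set.Ioi 0) := hFmono.monotoneOn
  have hFle : ∀ a b : ℝ, 0 < a → 0 < b → F a ≤ F b → a ≤ b := by
    intro a b ha hb h
    by_contra hab
    push_neg at hab
    exact absurd (hFmono (Set.mem_Ioi.2 hb) (Set.mem_Ioi.2 ha) hab) (not_lt.2 h)
  have hphi_pos : ∀ y : E2, 0 < phiSq l y := fun y => by
    unfold phiSq; positivity
  have hphi_le : ∀ y : E2, phiSq l y ≤ (2 * π * l ^ 2)⁻¹ := fun y => by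
    unfold phiSq
    nth_rewrite 2 [show (2 * π * l ^ 2)⁻¹ = (2 * π * l ^ 2)⁻¹ * 1 by ring]
    refine mul_le_mul_of_nonneg_left ?_ (by positivity)
    rw [show (1:ℝ) = Real.exp 0 by simp]
    refine Real.exp_le_exp.2 ?_
    exact div_nonpos_of_nonpos_of_nonneg (neg_nonpos.2 (by positivity)) (by positivity)
  have hphi_cont : Continuous (phiSq l) :=
    continuous_const.mul (Real.continuous_exp.comp
      (((continuous_norm.pow 2).neg).div_const _))
  have hphi_int : Integrable (phiSq l) := integrable_phiSq hl
  have hphi_total : ∫ y : E2, phiSq l y = 1 := integral_phiSq hl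
  have hInt : ∀ x : E2, Integrable (fun y : E2 => phiSq l y * U (x - y)) := by
    intro x
    exact (hUint.comp_sub_left x).bdd_mul hphi_cont.aestronglyMeasurable
      (c := (2 * π * l ^ 2)⁻¹) (Eventually.of_forall fun y => by
        rw [Real.norm_eq_abs, abs_of_pos (hphi_pos y)]; exact hphi_le y)
  have hconv_pos : ∀ x : E2, 0 < gaussConv l U x := by
    intro x
    rw [gaussConv]
    refine (integral_pos_iff_support_of_nonneg_ae ?_ (hInt x)).2 ?_
    · exact Eventually.of_forall fun y => le_of_lt (mul_pos (hphi_pos y) (hUpos _))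
    · have hsupp : Function.support (fun y : E2 => phiSq l y * U (x - y)) = Set.univ := by
        ext y
        simp only [Function.mem_support, Set.mem_univ, iff_true]
        exact ne_of_gt (mul_pos (hphi_pos y) (hUpos (x - y)))
      rw [hsupp]
      refine lt_of_lt_of_le (Metric.measure_ball_pos volume (0:E2) one_pos) ?_
      exact measure_mono (Set.subset_univ _)
  -- comap helpers
  have hcomap : ∀ p : E2 → Prop, (∃ M : ℝ, ∀ x : E2, M ≤ ‖x‖ → p x) →
      ∀ᶠ x in comap (fun x : E2 => ‖x‖) atTop, p x := by
    rintro p ⟨M, hM⟩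
    exact eventually_comap.2 (eventually_atTop.2 ⟨M, fun n hn x hx => hM x (hx ▸ hn)⟩)
  have hcomap' : ∀ p : E2 → Prop, (∀ᶠ x in comap (fun x : E2 => ‖x‖) atTop, p x) →
      ∃ M : ℝ, ∀ x : E2, M ≤ ‖x‖ → p x := by
    intro p hp
    obtain ⟨M, hM⟩ := eventually_atTop.1 (eventually_comap.1 hp)
    exact ⟨M, fun x hx => hM ‖x‖ hx x rfl⟩
  -- quantitative decay of U
  have hUd : ∀ ε : ℝ, 0 < ε → ∃ M : ℝ, ∀ z : E2, M ≤ ‖z‖ →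
      (1 - ε) * ‖z‖ ≤ F (1 / U z) ∧ F (1 / U z) ≤ (1 + ε) * ‖z‖ := by
    intro ε hε
    have h1 : ∀ᶠ x in comap (fun x : E2 => ‖x‖) atTop, |F (1 / U x) / ‖x‖ - 1| < ε := by
      have := Metric.tendsto_nhds.1 hUdecay ε hε
      simpa [Real.dist_eq] using this
    obtain ⟨M, hM⟩ := hcomap' _ h1
    refine ⟨max M 1, fun z hz => ?_⟩
    have hz1 : (0:ℝ) < ‖z‖ := lt_of_lt_of_le one_pos (le_trans (le_max_right _ _) hz)
    have h2 := abs_lt.1 (hM z (le_trans (le_max_left _ _) hz))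
    have h3 : F (1 / U z) / ‖z‖ * ‖z‖ = F (1 / U z) := div_mul_cancel₀ _ (ne_of_gt hz1)
    constructor
    · nlinarith only [h2.1, h3, hz1]
    · nlinarith only [h2.2, h3, hz1]
  -- inverse function G
  have hsurj : ∀ s : ℝ, ∃ t : ℝ, 1 ≤ t ∧ (F 1 ≤ s → F t = s) := by
    intro s
    by_cases hs : F 1 ≤ s
    · obtain ⟨T, hT⟩ := ((hFtop.eventually_ge_atTop s).and (eventually_ge_atTop 1)).exists
      have h1T : (1:ℝ) ≤ T := hT.2
      have hsub : Set.Icc (1:ℝ) T ⊆ Set.Ioi 0 := fun t ht => lt_of_lt_of_le one_pos ht.1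
      have := intermediate_value_Icc h1T (hFcont.mono hsub)
      obtain ⟨t, ht, htF⟩ := this ⟨hs, hT.1⟩
      exact ⟨t, ht.1, fun _ => htF⟩
    · exact ⟨1, le_rfl, fun h => absurd h hs⟩
  choose G hG1 hGF using hsurj
  have hGpos : ∀ s : ℝ, 0 < G s := fun s => lt_of_lt_of_le one_pos (hG1 s)
  have hGge : ∀ A : ℝ, 1 ≤ A → ∀ s : ℝ, F A ≤ s → A ≤ G s := by
    intro A hA s hs
    have hs1 : F 1 ≤ s :=
      le_trans (hmono (Set.mem_Ioi.2 one_pos) (Set.mem_Ioi.2 (lt_of_lt_of_le one_pos hA)) hA) hs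
    have hFG := hGF s hs1
    exact hFle A (G s) (lt_of_lt_of_le one_pos hA) (hGpos s) (by rw [hFG]; exact hs)
  have hα1 : 1 / α ≤ 1 := by
    rw [div_le_one (by linarith)]; linarith
  -- main structure
  rw [tendsto_order]
  constructor
  · -- lower bound part
    intro a ha
    rcases le_or_gt a 0 with ha0 | ha0
    · refine hcomap _ ⟨1, fun x hx => ?_⟩
      have hx0 : (0:ℝ) < ‖x‖ := lt_of_lt_of_le one_pos hx
      have hF0 : 0 < F (1 / gaussConv l U x) := hFpos _ (by simp [hconv_pos x])
      exact lt_of_le_of_lt ha0 (div_pos hF0 hx0)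
    · set ε := (1 - a) / 5 with hεdef
      have hε : 0 < ε := by rw [hεdef]; linarith
      have hε1 : ε < 1 := by rw [hεdef]; linarith
      have haε : a < (1 - ε) ^ 4 := by
        have h2 : ε ^ 2 ≤ ε := by
          nlinarith only [mul_nonneg hε.le (sub_nonneg.2 hε1.le)]
        have h3 : ε ^ 3 ≤ ε ^ 2 := by
          nlinarith only [mul_nonneg (mul_nonneg hε.le hε.le) (sub_nonneg.2 hε1.le)]
        have h4 : ε ^ 4 ≤ ε ^ 3 := by
          nlinarith only [mul_nonneg (mul_nonneg (mul_nonneg hε.le hε.le) hε.le)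
            (sub_nonneg.2 hε1.le)]
        nlinarith only [h2, h3, h4, hε, hε1, hεdef, ha, ha0]
      obtain ⟨M₁, hM₁⟩ := hUd ε hε
      set K := 2 * l * (1 - ε) ^ 2 / ε + 1 with hKdef
      have hK0 : 0 ≤ 2 * l * (1 - ε) ^ 2 / ε := by positivity
      have hK1 : (1:ℝ) ≤ K := by rw [hKdef]; linarith
      obtain ⟨T₁, hT₁⟩ := eventually_atTop.1 (hFsub.eventually_ge_atTop K)
      set L := ((1 + ε)⁻¹ : ℝ) ^ (1/α : ℝ) with hLdef
      have hL0 : 0 < L := Real.rpow_pos_of_pos (by positivity) _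
      have hLge : 1 - ε ≤ L := by
        have h1 : ((1 + ε)⁻¹ : ℝ) ^ (1:ℝ) ≤ ((1 + ε)⁻¹ : ℝ) ^ (1/α : ℝ) :=
          Real.rpow_le_rpow_of_exponent_ge (by positivity)
            (inv_le_one_of_one_le₀ (by linarith)) hα1
        rw [Real.rpow_one] at h1
        have h2 : 1 - ε ≤ (1 + ε)⁻¹ := by
          rw [← one_div, le_div_iff₀ (by linarith)]
          nlinarith only [sq_nonneg ε]
        rw [hLdef]; linarith
      obtain ⟨T₂, hT₂⟩ := eventually_atTop.1 ((hFreg (1 + ε)⁻¹ (by positivity)).eventually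
        (eventually_gt_nhds (by nlinarith only [hL0, hε, mul_pos hε hL0] : (1 - ε) * L < L)))
      set MU := ∫ y : E2, U y with hMUdef
      have hMU0 : 0 ≤ MU := integral_nonneg fun y => le_of_lt (hUpos y)
      set A := (2 * π * l ^ 2)⁻¹ * MU with hAdef
      have hA0 : 0 ≤ A := by positivity
      have hqt : Tendsto (fun r : ℝ => Real.exp (ε ^ 2 * r ^ 2 / (4 * l ^ 2))) atTop atTop := by
        refine Real.tendsto_exp_atTop.comp ?_
        apply Tendsto.atTop_div_const (by positivity)
        exact (tendsto_pow_atTop (two_ne_zero)).const_mul_atTop (by positivity)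
      obtain ⟨M₂, hM₂⟩ := eventually_atTop.1 (hqt.eventually_ge_atTop (A / ε))
      set B := max (max T₁ T₂) 1 with hBdef
      have hB1 : (1:ℝ) ≤ B := le_max_right _ _
      refine hcomap _ ⟨max (max (F B / (1 - ε) ^ 2 + 1) (M₁ / (1 - ε) + 1)) (max 1 M₂),
        fun x hx => ?_⟩
      have hxB : F B / (1 - ε) ^ 2 + 1 ≤ ‖x‖ :=
        le_trans (le_trans (le_max_left _ _) (le_max_left _ _)) hx
      have hxM1 : M₁ / (1 - ε) + 1 ≤ ‖x‖ :=
        le_trans (le_trans (le_max_right _ _) (le_max_left _ _)) hx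
      have hx1 : (1:ℝ) ≤ ‖x‖ := le_trans (le_trans (le_max_left _ _) (le_max_right _ _)) hx
      have hxM2 : M₂ ≤ ‖x‖ := le_trans (le_trans (le_max_right _ _) (le_max_right _ _)) hx
      have hx0 : (0:ℝ) < ‖x‖ := lt_of_lt_of_le one_pos hx1
      set s' := (1 - ε) ^ 2 * ‖x‖ with hs'def
      have hs'B : F B ≤ s' := by
        have h1 : F B / (1 - ε) ^ 2 ≤ ‖x‖ := by linarith
        rw [div_le_iff₀ (pow_pos (by linarith : (0:ℝ) < 1 - ε) 2)] at h1
        rw [hs'def]; linarith [mul_comm ‖x‖ ((1 - ε) ^ 2), h1]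
      have hs'F1 : F 1 ≤ s' :=
        le_trans (hmono (Set.mem_Ioi.2 one_pos)
          (Set.mem_Ioi.2 (lt_of_lt_of_le one_pos hB1)) hB1) hs'B
      set σ := G s' with hσdef
      have hFσ : F σ = s' := hGF s' hs'F1
      have hσB : B ≤ σ := hGge B hB1 s' hs'B
      have hσ0 : (0:ℝ) < σ := hGpos s'
      have hσT₁ : T₁ ≤ σ := le_trans (le_trans (le_max_left _ _) (le_max_left _ _)) hσB
      have hσT₂ : T₂ ≤ σ := le_trans (le_trans (le_max_right _ _) (le_max_left _ _)) hσB
      have hFσ0 : 0 < F σ := hFpos σ hσ0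
      have hUup : ∀ y ∈ Metric.ball (0:E2) (ε * ‖x‖), U (x - y) ≤ 1 / σ := by
        intro y hy
        have hyR : ‖y‖ < ε * ‖x‖ := by simpa [dist_zero_right] using hy
        have hxylow : (1 - ε) * ‖x‖ ≤ ‖x - y‖ := by
          have h := norm_sub_norm_le x y
          have h2 : (1 - ε) * ‖x‖ = ‖x‖ - ε * ‖x‖ := by ring
          linarith
        have hxyM : M₁ ≤ ‖x - y‖ := by
          have h2 : M₁ / (1 - ε) ≤ ‖x‖ := by linarith
          rw [div_le_iff₀ (by linarith : (0:ℝ) < 1 - ε)] at h2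
          have h3 := mul_comm ‖x‖ (1 - ε)
          linarith
        have h1 := (hM₁ (x - y) hxyM).1
        have h2 : F σ ≤ F (1 / U (x - y)) := by
          rw [hFσ, hs'def]
          have h3 : (1 - ε) * ((1 - ε) * ‖x‖) ≤ (1 - ε) * ‖x - y‖ :=
            mul_le_mul_of_nonneg_left hxylow (by linarith)
          have h4 : (1 - ε) ^ 2 * ‖x‖ = (1 - ε) * ((1 - ε) * ‖x‖) := by ring
          linarith
        have h3 : σ ≤ 1 / U (x - y) :=
          hFle _ _ hσ0 (by simp [hUpos (x - y)]) h2
        have h4 := one_div_le_one_div_of_le hσ0 h3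
        rwa [one_div_one_div] at h4
      set q := ε ^ 2 * ‖x‖ ^ 2 / (4 * l ^ 2) with hqdef
      have hσq : σ ≤ Real.exp q := by
        have h1 := hT₁ σ hσT₁
        have hsq0 : 0 < Real.sqrt (Real.log σ) := by
          rcases eq_or_lt_of_le (Real.sqrt_nonneg (Real.log σ)) with h | h
          · exfalso
            rw [← h] at h1
            simp at h1
            linarith
          · exact h
        have hlog0 : 0 < Real.log σ := Real.sqrt_pos.1 hsq0
        have h2 : Real.sqrt (Real.log σ) ≤ F σ / K := by
          rw [le_div_iff₀ (by linarith : (0:ℝ) < K)]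
          rw [le_div_iff₀ hsq0] at h1
          linarith [mul_comm K (Real.sqrt (Real.log σ)), h1]
        have h3 : Real.log σ ≤ (F σ / K) ^ 2 := by
          have h5 := Real.sq_sqrt (le_of_lt hlog0)
          nlinarith only [Real.sqrt_nonneg (Real.log σ), h2, h5, hsq0]
        have h4 : (F σ / K) ^ 2 ≤ q := by
          rw [hFσ, hs'def, hqdef, div_pow,
            div_le_div_iff₀ (pow_pos (by linarith : (0:ℝ) < K) 2) (by positivity)]
          have h5 : 2 * l * (1 - ε) ^ 2 ≤ ε * K := by
            have h6 : ε * (2 * l * (1 - ε) ^ 2 / ε) = 2 * l * (1 - ε) ^ 2 := by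
              field_simp
            rw [hKdef, mul_add, h6]
            linarith
          have h6 : (2 * l * (1 - ε) ^ 2) * (2 * l * (1 - ε) ^ 2) ≤ (ε * K) * (ε * K) :=
            mul_le_mul h5 h5 (by positivity) (by positivity)
          have h7 := mul_le_mul_of_nonneg_right h6 (sq_nonneg ‖x‖)
          nlinarith only [h7]
        calc σ = Real.exp (Real.log σ) := (Real.exp_log hσ0).symm
          _ ≤ Real.exp q := Real.exp_le_exp.2 (le_trans h3 h4)
      set S := Metric.ball (0:E2) (ε * ‖x‖) with hSdef
      have hsplit : gaussConv l U x =
          (∫ y in S, phiSq l y * U (x - y)) + ∫ y in Sᶜ, phiSq l y * U (x - y) := by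
        rw [gaussConv, ← integral_add_compl measurableSet_ball (hInt x)]
      have hbound1 : (∫ y in S, phiSq l y * U (x - y)) ≤ 1 / σ := by
        have h1 : (∫ y in S, phiSq l y * U (x - y)) ≤ ∫ y in S, phiSq l y * (1 / σ) :=
          setIntegral_mono_on ((hInt x).integrableOn) ((hphi_int.mul_const _).integrableOn)
            measurableSet_ball
            (fun y hy => mul_le_mul_of_nonneg_left (hUup y hy) (le_of_lt (hphi_pos y)))
        have h2 : ∫ y in S, phiSq l y * (1 / σ) = (∫ y in S, phiSq l y) * (1 / σ) :=
          integral_mul_const _ _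
        have h3 : (∫ y in S, phiSq l y) ≤ 1 := by
          rw [← hphi_total]
          exact setIntegral_le_integral hphi_int
            (Eventually.of_forall fun y => le_of_lt (hphi_pos y))
        calc (∫ y in S, phiSq l y * U (x - y)) ≤ (∫ y in S, phiSq l y) * (1 / σ) := by
              rw [← h2]; exact h1
          _ ≤ 1 * (1 / σ) := mul_le_mul_of_nonneg_right h3 (by positivity)
          _ = 1 / σ := one_mul _
      have hbound2 : (∫ y in Sᶜ, phiSq l y * U (x - y)) ≤ ε / σ := by
        set Cx := (2 * π * l ^ 2)⁻¹ * Real.exp (-(ε * ‖x‖) ^ 2 / (2 * l ^ 2)) with hCxdef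
        have hCx0 : 0 ≤ Cx := by positivity
        have hφtail : ∀ y ∈ Sᶜ, phiSq l y * U (x - y) ≤ Cx * U (x - y) := by
          intro y hy
          have hyx : ε * ‖x‖ ≤ ‖y‖ := by
            simp only [hSdef, Set.mem_compl_iff, Metric.mem_ball, dist_zero_right, not_lt] at hy
            exact hy
          refine mul_le_mul_of_nonneg_right ?_ (le_of_lt (hUpos _))
          rw [phiSq, hCxdef]
          refine mul_le_mul_of_nonneg_left (Real.exp_le_exp.2 ?_) (by positivity)
          have h5 : (ε * ‖x‖) ^ 2 ≤ ‖y‖ ^ 2 :=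
            pow_le_pow_left₀ (by positivity) hyx 2
          rw [div_le_div_iff₀ (by positivity) (by positivity)]
          nlinarith only [mul_nonneg (by linarith only [h5] : (0:ℝ) ≤ ‖y‖ ^ 2 - (ε * ‖x‖) ^ 2)
            (by positivity : (0:ℝ) ≤ 2 * l ^ 2)]
        have h1 : (∫ y in Sᶜ, phiSq l y * U (x - y)) ≤ ∫ y in Sᶜ, Cx * U (x - y) :=
          setIntegral_mono_on ((hInt x).integrableOn)
            (((hUint.comp_sub_left x).const_mul _).integrableOn)
            measurableSet_ball.compl hφtail
        have h2 : ∫ y in Sᶜ, Cx * U (x - y) = Cx * ∫ y in Sᶜ, U (x - y) :=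
          integral_const_mul _ _
        have h3 : ∫ y in Sᶜ, U (x - y) ≤ MU := by
          have h4 : ∫ y : E2, U (x - y) = MU := by
            rw [hMUdef]
            exact integral_sub_left_eq_self U volume x
          rw [← h4]
          exact setIntegral_le_integral (hUint.comp_sub_left x)
            (Eventually.of_forall fun y => le_of_lt (hUpos _))
        have hexpq : A / ε ≤ Real.exp q := hM₂ ‖x‖ hxM2
        have htail : Cx * MU ≤ ε / σ := by
          rw [le_div_iff₀ hσ0]
          have hh1 : Cx * MU * σ ≤ Cx * MU * Real.exp q :=
            mul_le_mul_of_nonneg_left hσq (by positivity)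
          have hh2 : Real.exp (-(ε * ‖x‖) ^ 2 / (2 * l ^ 2)) * Real.exp q = Real.exp (-q) := by
            rw [← Real.exp_add]
            congr 1
            rw [hqdef]
            field_simp
            ring
          have hh3 : Cx * MU * Real.exp q = A * Real.exp (-q) := by
            rw [hCxdef, hAdef]
            calc (2 * π * l ^ 2)⁻¹ * Real.exp (-(ε * ‖x‖) ^ 2 / (2 * l ^ 2)) * MU * Real.exp q
                = (2 * π * l ^ 2)⁻¹ * MU *
                  (Real.exp (-(ε * ‖x‖) ^ 2 / (2 * l ^ 2)) * Real.exp q) := by ring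
              _ = (2 * π * l ^ 2)⁻¹ * MU * Real.exp (-q) := by rw [hh2]
          have hh4 : A ≤ Real.exp q * ε := by
            rw [div_le_iff₀ hε] at hexpq
            exact hexpq
          have hh5 : A * Real.exp (-q) ≤ Real.exp q * ε * Real.exp (-q) :=
            mul_le_mul_of_nonneg_right hh4 (le_of_lt (Real.exp_pos _))
          have hh6 : Real.exp q * ε * Real.exp (-q) = ε := by
            rw [Real.exp_neg]
            field_simp
          linarith only [hh1, hh3, hh5, hh6]
        calc (∫ y in Sᶜ, phiSq l y * U (x - y)) ≤ Cx * ∫ y in Sᶜ, U (x - y) := by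
              rw [← h2]; exact h1
          _ ≤ Cx * MU := mul_le_mul_of_nonneg_left h3 hCx0
          _ ≤ ε / σ := htail
      have hconvup : gaussConv l U x ≤ (1 + ε) / σ := by
        rw [hsplit]
        have h1 : (1:ℝ) / σ + ε / σ = (1 + ε) / σ := (add_div 1 ε σ).symm
        linarith only [h1, hbound1, hbound2]
      have hinv : (1 + ε)⁻¹ * σ ≤ 1 / gaussConv l U x := by
        have h1 := one_div_le_one_div_of_le (hconv_pos x) hconvup
        rw [one_div_div] at h1
        calc (1 + ε)⁻¹ * σ = σ / (1 + ε) := by ring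
          _ ≤ 1 / gaussConv l U x := h1
      have hF1 : F ((1 + ε)⁻¹ * σ) ≤ F (1 / gaussConv l U x) :=
        hmono (Set.mem_Ioi.2 (by positivity))
          (Set.mem_Ioi.2 (by simp [hconv_pos x])) hinv
      have hF2 : (1 - ε) * L * F σ < F ((1 + ε)⁻¹ * σ) := by
        have h := hT₂ σ hσT₂
        rw [lt_div_iff₀ hFσ0] at h
        linarith
      rw [lt_div_iff₀ hx0]
      have hg1 : (1 - ε) * (1 - ε) * F σ ≤ (1 - ε) * L * F σ := by
        have h1 : (1 - ε) * (1 - ε) ≤ (1 - ε) * L :=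
          mul_le_mul_of_nonneg_left hLge (by linarith)
        exact mul_le_mul_of_nonneg_right h1 (le_of_lt hFσ0)
      have hg2 : (1 - ε) * (1 - ε) * F σ = (1 - ε) ^ 4 * ‖x‖ := by
        rw [hFσ, hs'def]; ring
      have hg3 : a * ‖x‖ < (1 - ε) ^ 4 * ‖x‖ := mul_lt_mul_of_pos_right haε hx0
      linarith only [hF1, hF2, hg1, hg2, hg3]

  · -- upper bound part
    intro b hb
    set ε := min 1 ((b - 1) / 16) with hεdef
    have hε : 0 < ε := lt_min one_pos (by linarith)
    have hε1 : ε ≤ 1 := min_le_left _ _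
    have hε16 : ε ≤ (b - 1) / 16 := min_le_right _ _
    have hbε : (1 + ε) ^ 4 < b := by
      have h2 : ε ^ 2 ≤ ε := by
        nlinarith only [mul_nonneg hε.le (sub_nonneg.2 hε1)]
      have h3 : ε ^ 3 ≤ ε := by
        nlinarith only [mul_nonneg (mul_nonneg hε.le hε.le) (sub_nonneg.2 hε1), h2]
      have h4 : ε ^ 4 ≤ ε := by
        nlinarith only [mul_nonneg (mul_nonneg (mul_nonneg hε.le hε.le) hε.le)
          (sub_nonneg.2 hε1), h3]
      nlinarith only [h2, h3, h4, hε, hε16]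
    obtain ⟨M₁, hM₁⟩ := hUd ε hε
    have hIball : Tendsto (fun n : ℕ => ∫ y in Metric.ball (0:E2) n, phiSq l y)
        atTop (nhds 1) := by
      have hmonoS : Monotone (fun n : ℕ => Metric.ball (0:E2) n) := fun i j hij =>
        Metric.ball_subset_ball (by exact_mod_cast hij)
      have hun : (⋃ n : ℕ, Metric.ball (0:E2) n) = Set.univ := Metric.iUnion_ball_nat 0
      have h := tendsto_setIntegral_of_monotone (fun n : ℕ => measurableSet_ball)
        hmonoS (by rw [hun]; exact hphi_int.integrableOn)
      rw [hun] at h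
      simpa [hphi_total] using h
    have hrpow : Tendsto (fun n : ℕ => ((∫ y in Metric.ball (0:E2) n, phiSq l y)⁻¹) ^ (1/α : ℝ))
        atTop (nhds 1) := by
      have h1 : Tendsto (fun n : ℕ => (∫ y in Metric.ball (0:E2) n, phiSq l y)⁻¹)
          atTop (nhds 1) := by
        simpa using hIball.inv₀ one_ne_zero
      have h2 := h1.rpow_const (p := 1/α) (Or.inl one_ne_zero)
      simpa using h2
    obtain ⟨n, hn2, hnr⟩ := ((hIball.eventually (eventually_gt_nhds (by norm_num : (1/2:ℝ) < 1))).and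
      (hrpow.eventually (eventually_lt_nhds (by linarith : (1:ℝ) < 1 + ε)))).exists
    set R := (n : ℝ) with hRdef
    set I := ∫ y in Metric.ball (0:E2) R, phiSq l y with hIdef
    have hR0 : (0:ℝ) ≤ R := Nat.cast_nonneg n
    have hI0 : 0 < I := by rw [hIdef]; linarith [hn2]
    have hIinv : (0:ℝ) < I⁻¹ := by positivity
    obtain ⟨T₂, hT₂⟩ := eventually_atTop.1 ((hFreg I⁻¹ hIinv).eventually (eventually_lt_nhds hnr))
    set B := max T₂ 1 with hBdef
    have hB1 : (1:ℝ) ≤ B := le_max_right _ _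
    refine hcomap _ ⟨max (max (F B) (M₁ + R)) (max 1 (R / ε)), fun x hx => ?_⟩
    have hxB : F B ≤ ‖x‖ := le_trans (le_trans (le_max_left _ _) (le_max_left _ _)) hx
    have hxM1 : M₁ + R ≤ ‖x‖ := le_trans (le_trans (le_max_right _ _) (le_max_left _ _)) hx
    have hx1 : (1:ℝ) ≤ ‖x‖ := le_trans (le_trans (le_max_left _ _) (le_max_right _ _)) hx
    have hxR : R / ε ≤ ‖x‖ := le_trans (le_trans (le_max_right _ _) (le_max_right _ _)) hx
    have hx0 : (0:ℝ) < ‖x‖ := lt_of_lt_of_le one_pos hx1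
    have hRε : R ≤ ε * ‖x‖ := by
      rw [div_le_iff₀ hε] at hxR
      have h := mul_comm ‖x‖ ε
      linarith [hxR]
    set s := (1 + ε) * (‖x‖ + R) with hsdef
    have hsx : ‖x‖ ≤ s := by
      rw [hsdef]
      have h1 : ‖x‖ + R ≤ (1 + ε) * (‖x‖ + R) :=
        le_mul_of_one_le_left (by linarith) (by linarith)
      linarith
    have hsF1 : F 1 ≤ s :=
      le_trans (le_trans (hmono (Set.mem_Ioi.2 one_pos)
        (Set.mem_Ioi.2 (lt_of_lt_of_le one_pos hB1)) hB1) hxB) hsx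
    set t := G s with htdef
    have hFt : F t = s := hGF s hsF1
    have htB : B ≤ t := hGge B hB1 s (le_trans hxB hsx)
    have ht0 : (0:ℝ) < t := hGpos s
    have htT₂ : T₂ ≤ t := le_trans (le_max_left _ _) htB
    have hUlow : ∀ y ∈ Metric.ball (0:E2) R, 1 / t ≤ U (x - y) := by
      intro y hy
      have hyR : ‖y‖ < R := by simpa [dist_zero_right] using hy
      have hxy : M₁ ≤ ‖x - y‖ := by
        have h := norm_sub_norm_le x y
        linarith
      have h2 := (hM₁ (x - y) hxy).2
      have hxyle : ‖x - y‖ ≤ ‖x‖ + R := le_trans (norm_sub_le x y) (by linarith)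
      have h3 : F (1 / U (x - y)) ≤ F t := by
        rw [hFt, hsdef]
        exact le_trans h2 (mul_le_mul_of_nonneg_left hxyle (by linarith))
      have h4 : 1 / U (x - y) ≤ t :=
        hFle _ _ (by simp [hUpos (x - y)]) ht0 h3
      have h5 := one_div_le_one_div_of_le (by simp [hUpos (x - y)] : (0:ℝ) < 1 / U (x - y)) h4
      rwa [one_div_one_div] at h5
    have hconvlow : I / t ≤ gaussConv l U x := by
      have h1 : ∫ y in Metric.ball (0:E2) R, phiSq l y * (1/t) ≤
          ∫ y in Metric.ball (0:E2) R, phiSq l y * U (x - y) :=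
        setIntegral_mono_on ((hphi_int.mul_const _).integrableOn)
          ((hInt x).integrableOn) measurableSet_ball
          (fun y hy => mul_le_mul_of_nonneg_left (hUlow y hy) (le_of_lt (hphi_pos y)))
      have h2 : ∫ y in Metric.ball (0:E2) R, phiSq l y * (1/t) = I * (1/t) :=
        integral_mul_const _ _
      have h3 : ∫ y in Metric.ball (0:E2) R, phiSq l y * U (x - y) ≤ gaussConv l U x := by
        rw [gaussConv]
        exact setIntegral_le_integral (hInt x)
          (Eventually.of_forall fun y => le_of_lt (mul_pos (hphi_pos y) (hUpos _)))
      calc I / t = I * (1/t) := by ring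
        _ ≤ ∫ y in Metric.ball (0:E2) R, phiSq l y * U (x - y) := h2 ▸ h1
        _ ≤ gaussConv l U x := h3
    have hIt : 0 < I / t := by positivity
    have hinv : 1 / gaussConv l U x ≤ I⁻¹ * t := by
      have h1 := one_div_le_one_div_of_le hIt hconvlow
      rw [one_div_div] at h1
      calc 1 / gaussConv l U x ≤ t / I := h1
        _ = I⁻¹ * t := by ring
    have hF1 : F (1 / gaussConv l U x) ≤ F (I⁻¹ * t) :=
      hmono (Set.mem_Ioi.2 (by simp [hconv_pos x]))
        (Set.mem_Ioi.2 (by positivity)) hinv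
    have hF2 : F (I⁻¹ * t) < (1 + ε) * F t := by
      have h := hT₂ t htT₂
      rw [div_lt_iff₀ (hFpos t ht0)] at h
      linarith
    rw [div_lt_iff₀ hx0]
    have h6 : F (1 / gaussConv l U x) < (1 + ε) * s := by
      rw [← hFt]; exact lt_of_le_of_lt hF1 hF2
    have hA1 : ‖x‖ + R ≤ (1 + ε) * ‖x‖ := by
      have h : (1 + ε) * ‖x‖ = ‖x‖ + ε * ‖x‖ := by ring
      linarith
    have hs2 : s ≤ (1 + ε) ^ 2 * ‖x‖ := by
      rw [hsdef]
      calc (1 + ε) * (‖x‖ + R) ≤ (1 + ε) * ((1 + ε) * ‖x‖) :=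
            mul_le_mul_of_nonneg_left hA1 (by linarith)
        _ = (1 + ε) ^ 2 * ‖x‖ := by ring
    have h8 : (1 + ε) * s ≤ (1 + ε) ^ 3 * ‖x‖ := by
      calc (1 + ε) * s ≤ (1 + ε) * ((1 + ε) ^ 2 * ‖x‖) :=
            mul_le_mul_of_nonneg_left hs2 (by linarith)
        _ = (1 + ε) ^ 3 * ‖x‖ := by ring
    have h10 : (1 + ε) ^ 3 < b :=
      lt_of_le_of_lt (pow_le_pow_right₀ (by linarith) (by norm_num)) hbε
    have h9 : (1 + ε) ^ 3 * ‖x‖ < b * ‖x‖ := mul_lt_mul_of_pos_right h10 hx0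
    linarith only [h6, h8, h9]
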